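/- The 8-dimensional Lebesgue volume of B′_O(0,r) = {x ∈ ℝ⁸ : max_{1≤i≤7} √(x₀²+xᵢ²) < r} equals 2⁸·∫₀^r (r²−t²)^{7/2} dt = 35π·r⁸, which is (24·35/π³) times the volume of the Euclidean 8-ball of radius r. -/

import Mathlib

open MeasureTheory Real


lemma cont_g (r : ℝ) : Continuous fun t : ℝ => (r^2 - t^2) ^ ((7:ℝ)/2) := by
  have h : Continuous fun x : ℝ => x ^ ((7:ℝ)/2) :=
    continuous_iff_continuousAt.2 fun x => Real.continuousAt_rpow_const x _ (Or.inr (by norm_num))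
  exact h.comp (by continuity)

lemma keyInt (r : ℝ) (hr : 0 < r) :
    ∫ t in (0:ℝ)..r, (r^2 - t^2) ^ ((7:ℝ)/2) = 35*π/256 * r^8 := by
  have h := intervalIntegral.integral_comp_smul_deriv (a := 0) (b := π/2)
    (f := fun θ => r * sin θ) (f' := fun θ => r * cos θ)
    (g := fun t => (r^2 - t^2) ^ ((7:ℝ)/2))
    (fun x _ => (hasDerivAt_sin x).const_mul r)
    (by fun_prop) (cont_g r)
  simp only [Function.comp_def, sin_zero, mul_zero, sin_pi_div_two, mul_one] at h
  rw [← h]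
  have hc : ∀ θ ∈ Set.uIcc (0:ℝ) (π/2),
      (r * cos θ) • ((r^2 - (r * sin θ)^2) ^ ((7:ℝ)/2)) = r^8 * cos θ ^ 8 := by
    intro θ hθ
    rw [Set.uIcc_of_le (by positivity)] at hθ
    have hcos : 0 ≤ cos θ := cos_nonneg_of_mem_Icc (Set.Icc_subset_Icc (by linarith [pi_pos]) le_rfl hθ)
    have hx : 0 ≤ r * cos θ := by positivity
    have h1 : r^2 - (r * sin θ)^2 = (r * cos θ)^2 := by
      have := sin_sq_add_cos_sq θ; nlinarith
    rw [h1, smul_eq_mul, ← Real.rpow_natCast (r * cos θ) 2, ← Real.rpow_mul hx]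
    norm_num
    ring
  rw [intervalIntegral.integral_congr hc]
  rw [intervalIntegral.integral_const_mul]
  rw [show (8:ℕ)=6+2 from rfl, integral_cos_pow, show (6:ℕ)=4+2 from rfl, integral_cos_pow,
      show (4:ℕ)=2+2 from rfl, integral_cos_pow, show (2:ℕ)=0+2 from rfl, integral_cos_pow]
  simp [cos_pi_div_two]
  ring


lemma main_volume (r : ℝ) (hr : 0 < r) :
    volume {x : EuclideanSpace ℝ (Fin 8) |
        ∀ i : Fin 7, Real.sqrt (x 0 ^ 2 + x i.succ ^ 2) < r} =
      ∫⁻ t : ℝ, ENNReal.ofReal (2 * Real.sqrt (r^2 - t^2)) ^ 7 := by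
  have hA : MeasurableSet {p : ℝ × (Fin 7 → ℝ) | ∀ i : Fin 7, Real.sqrt (p.1 ^ 2 + p.2 i ^ 2) < r} := by
    rw [Set.setOf_forall]
    refine MeasurableSet.iInter fun i => measurableSet_lt ?_ measurable_const
    exact Measurable.sqrt (by fun_prop)
  -- transfer Euclidean -> pi
  rw [← ((EuclideanSpace.volume_preserving_symm_measurableEquiv_toLp (Fin 8)).symm).measure_preimage ?_]
  case _ =>
    -- transfer pi -> prod
    have h2 := (MeasureTheory.volume_preserving_piFinSuccAbove (fun _ : Fin 8 => ℝ) 0).measure_preimage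
      hA.nullMeasurableSet
    have hset : (MeasurableEquiv.piFinSuccAbove (fun _ : Fin 8 => ℝ) 0) ⁻¹'
        {p : ℝ × (Fin 7 → ℝ) | ∀ i : Fin 7, Real.sqrt (p.1 ^ 2 + p.2 i ^ 2) < r}
        = (MeasurableEquiv.toLp 2 (Fin 8 → ℝ)).symm.symm ⁻¹'
          {x : EuclideanSpace ℝ (Fin 8) | ∀ i : Fin 7, Real.sqrt (x 0 ^ 2 + x i.succ ^ 2) < r} := by
      ext x
      simp [MeasurableEquiv.piFinSuccAbove_apply, Fin.succAbove_zero, Fin.tail,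
        MeasurableEquiv.coe_toLp]
    rw [hset] at h2
    rw [h2, Measure.volume_eq_prod, Measure.prod_apply hA]
    congr 1
    ext t
    have hslice : Prod.mk t ⁻¹' {p : ℝ × (Fin 7 → ℝ) | ∀ i : Fin 7, Real.sqrt (p.1 ^ 2 + p.2 i ^ 2) < r}
        = Set.pi Set.univ (fun _ : Fin 7 => Set.Ioo (-Real.sqrt (r^2 - t^2)) (Real.sqrt (r^2 - t^2))) := by
      ext y
      simp only [Set.mem_preimage, Set.mem_setOf_eq, Set.mem_pi, Set.mem_univ, Set.mem_Ioo,
        forall_const]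
      refine forall_congr' fun i => ?_
      rw [Real.sqrt_lt' hr, ← abs_lt, ← sq_abs (y i),
        show t^2 + |y i|^2 < r^2 ↔ |y i|^2 < r^2 - t^2 by constructor <;> intro <;> linarith,
        ← Real.lt_sqrt (abs_nonneg _)]
    rw [hslice, volume_pi_pi]
    simp only [Real.volume_Ioo, sub_neg_eq_add, Finset.prod_const]
    norm_num
    ring_nf
    rw [ENNReal.ofReal_mul' (by norm_num), mul_pow]
    norm_num
  case _ =>
    -- null measurability of the Euclidean set
    refine MeasurableSet.nullMeasurableSet ?_
    rw [Set.setOf_forall]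
    refine MeasurableSet.iInter fun i => measurableSet_lt ?_ measurable_const
    have h0 : Measurable fun x : EuclideanSpace ℝ (Fin 8) => x 0 :=
      (measurable_pi_apply 0).comp (MeasurableEquiv.toLp 2 (Fin 8 → ℝ)).symm.measurable
    have hi : Measurable fun x : EuclideanSpace ℝ (Fin 8) => x i.succ :=
      (measurable_pi_apply i.succ).comp (MeasurableEquiv.toLp 2 (Fin 8 → ℝ)).symm.measurable
    exact ((h0.pow_const 2).add (hi.pow_const 2)).sqrt


lemma lint_eq (r : ℝ) (hr : 0 < r) :
    (∫⁻ t : ℝ, ENNReal.ofReal (2 * Real.sqrt (r^2 - t^2)) ^ 7) =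
      ENNReal.ofReal (2^8 * ∫ t in (0:ℝ)..r, (r^2 - t^2) ^ ((7:ℝ)/2)) := by
  have hfun : (fun t : ℝ => ENNReal.ofReal (2 * Real.sqrt (r^2 - t^2)) ^ 7) =
      Set.indicator (Set.Ioo (-r) r) (fun t => ENNReal.ofReal (2^7 * (r^2 - t^2) ^ ((7:ℝ)/2))) := by
    funext t
    by_cases ht : t ∈ Set.Ioo (-r) r
    · rw [Set.indicator_of_mem ht]
      obtain ⟨h1, h2⟩ := ht
      have hpos : (0:ℝ) ≤ r^2 - t^2 := by nlinarith
      rw [← ENNReal.ofReal_pow (by positivity)]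
      congr 1
      rw [mul_pow, Real.sqrt_eq_rpow, ← Real.rpow_natCast ((r^2-t^2) ^ ((1:ℝ)/2)) 7,
        ← Real.rpow_mul hpos]
      norm_num
    · rw [Set.indicator_of_notMem ht]
      have : r^2 - t^2 ≤ 0 := by
        simp only [Set.mem_Ioo, not_and_or, not_lt] at ht
        rcases ht with h | h <;> nlinarith
      rw [Real.sqrt_eq_zero'.mpr this]
      simp
  have hstep : (∫⁻ t : ℝ, ENNReal.ofReal (2 * Real.sqrt (r^2 - t^2)) ^ 7)
      = ∫⁻ t in Set.Ioo (-r) r, ENNReal.ofReal (2^7 * (r^2 - t^2) ^ ((7:ℝ)/2)) := by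
    rw [← lintegral_indicator measurableSet_Ioo]
    exact lintegral_congr fun t => congrFun hfun t
  rw [hstep]
  have hcont : Continuous fun t : ℝ => 2^7 * (r^2 - t^2) ^ ((7:ℝ)/2) :=
    continuous_const.mul (cont_g r)
  have hint : IntegrableOn (fun t : ℝ => 2^7 * (r^2 - t^2) ^ ((7:ℝ)/2)) (Set.Ioo (-r) r) :=
    (hcont.integrableOn_Icc).mono_set Set.Ioo_subset_Icc_self
  rw [← MeasureTheory.ofReal_integral_eq_lintegral_ofReal hint ?_]
  case _ =>
    congr 1
    have h1 : ∫ t in Set.Ioo (-r) r, 2^7 * (r^2 - t^2) ^ ((7:ℝ)/2)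
        = ∫ t in (-r)..r, 2^7 * (r^2 - t^2) ^ ((7:ℝ)/2) := by
      rw [intervalIntegral.integral_of_le (by linarith), MeasureTheory.integral_Ioc_eq_integral_Ioo]
    rw [h1, intervalIntegral.integral_const_mul]
    have heven : ∫ t in (-r)..(0:ℝ), (r^2 - t^2) ^ ((7:ℝ)/2)
        = ∫ t in (0:ℝ)..r, (r^2 - t^2) ^ ((7:ℝ)/2) := by
      have hneg := intervalIntegral.integral_comp_neg (a := 0) (b := r)
        (f := fun t => (r^2 - t^2) ^ ((7:ℝ)/2))
      simp only [neg_zero] at hneg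
      rw [← hneg]
      congr 1
      funext t
      norm_num
    have hsplit := intervalIntegral.integral_add_adjacent_intervals
      (a := -r) (b := 0) (c := r) (f := fun t => (r^2 - t^2) ^ ((7:ℝ)/2)) (μ := volume)
      ((cont_g r).intervalIntegrable _ _) ((cont_g r).intervalIntegrable _ _)
    rw [← hsplit, heven]
    ring
  case _ =>
    filter_upwards [ae_restrict_mem measurableSet_Ioo] with t ht
    obtain ⟨h1, h2⟩ := ht
    have hpos : (0:ℝ) ≤ r^2 - t^2 := by nlinarith
    positivity


theorem volume_octonion_qn'_ball (r : ℝ) (hr : 0 < r) :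
    volume {x : EuclideanSpace ℝ (Fin 8) |
        ∀ i : Fin 7, Real.sqrt (x 0 ^ 2 + x i.succ ^ 2) < r} =
      ENNReal.ofReal (2 ^ 8 * ∫ t in (0 : ℝ)..r, (r ^ 2 - t ^ 2) ^ ((7 : ℝ) / 2)) ∧
    volume {x : EuclideanSpace ℝ (Fin 8) |
        ∀ i : Fin 7, Real.sqrt (x 0 ^ 2 + x i.succ ^ 2) < r} =
      ENNReal.ofReal (35 * π * r ^ 8) ∧
    volume {x : EuclideanSpace ℝ (Fin 8) |
        ∀ i : Fin 7, Real.sqrt (x 0 ^ 2 + x i.succ ^ 2) < r} =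
      ENNReal.ofReal (24 * 35 / π ^ 3) * volume (Metric.ball (0 : EuclideanSpace ℝ (Fin 8)) r) := by
  have h1 : volume {x : EuclideanSpace ℝ (Fin 8) |
      ∀ i : Fin 7, Real.sqrt (x 0 ^ 2 + x i.succ ^ 2) < r} =
      ENNReal.ofReal (2 ^ 8 * ∫ t in (0 : ℝ)..r, (r ^ 2 - t ^ 2) ^ ((7 : ℝ) / 2)) := by
    rw [main_volume r hr, lint_eq r hr]
  have h2 : volume {x : EuclideanSpace ℝ (Fin 8) |
      ∀ i : Fin 7, Real.sqrt (x 0 ^ 2 + x i.succ ^ 2) < r} =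
      ENNReal.ofReal (35 * π * r ^ 8) := by
    rw [h1, keyInt r hr]
    congr 1
    ring
  refine ⟨h1, h2, ?_⟩
  rw [h2, EuclideanSpace.volume_ball]
  have hgamma : Real.Gamma (Fintype.card (Fin 8) / 2 + 1) = 24 := by
    rw [Fintype.card_fin]
    norm_num
  have hsqrtpi : Real.sqrt π ^ Fintype.card (Fin 8) = π ^ 4 := by
    rw [Fintype.card_fin, show (8:ℕ) = 2*4 from rfl, pow_mul, Real.sq_sqrt pi_pos.le]
  rw [hgamma, hsqrtpi, Fintype.card_fin, ← ENNReal.ofReal_pow hr.le,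
    ← ENNReal.ofReal_mul (by positivity), ← ENNReal.ofReal_mul (by positivity)]
  congr 1
  have hπ : π ≠ 0 := pi_ne_zero
  field_simp
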